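/- Suppose for each k, D_k(x) = p_k(x)/(p_k(x) + p_g(x)) is the optimal discriminator output for client distribution p_k against generator distribution p_g, and let Φ_k(x) = D_k(x)/(1 - D_k(x)) be the odds. Then for every x in the support of p_g (i.e., p_g(x) > 0), and positive weights n_1, ..., n_K, we have n_k·Φ_k(x)/Σ_i n_i·Φ_i(x) = n_k·p_k(x)/Σ_i n_i·p_i(x), provided Σ_i n_i p_i(x) > 0. -/

import Mathlib

/-- With optimal discriminators `D k x = p k x / (p k x + pg x)` and odds
`Φ k x = D k x / (1 - D k x)`, for every `x` in the support of `pg` (and with positive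
denominator `∑ i, n i * p i x`) the odds-weighted normalization equals the
density-weighted normalization: `n k * Φ k x / ∑ i, n i * Φ i x = n k * p k x / ∑ i, n i * p i x`. -/
theorem odds_weighting_eq_density_weighting
    {X : Type*} (K : ℕ) (p : Fin K → X → ℝ) (pg : X → ℝ)
    (D Φ : Fin K → X → ℝ) (n : Fin K → ℝ)
    (hp : ∀ k x, 0 ≤ p k x) (hpg : ∀ x, 0 ≤ pg x) (hn : ∀ k, 0 < n k)
    (hD : ∀ k x, D k x = p k x / (p k x + pg x))
    (hΦ : ∀ k x, Φ k x = D k x / (1 - D k x)) :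
    ∀ x, 0 < pg x → 0 < (∑ i, n i * p i x) → ∀ k,
      n k * Φ k x / (∑ i, n i * Φ i x) = n k * p k x / (∑ i, n i * p i x) := by
  intro x hpgx hsum k
  have hΦp : ∀ i, Φ i x = p i x / pg x := by
    intro i
    have hden : 0 < p i x + pg x := by linarith [hp i x]
    rw [hΦ, hD]
    rw [show (1 : ℝ) - p i x / (p i x + pg x) = pg x / (p i x + pg x) by field_simp; ring]
    rw [div_div_div_cancel_right₀]
    exact hden.ne'
  have hsumΦ : (∑ i, n i * Φ i x) = (∑ i, n i * p i x) / pg x := by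
    rw [Finset.sum_div]
    exact Finset.sum_congr rfl fun i _ => by rw [hΦp, mul_div_assoc]
  rw [hΦp, hsumΦ, ← mul_div_assoc]
  rw [div_div_div_cancel_right₀ hpgx.ne']
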